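/- Let K be a kernel supported on (−1,1) and for s ≥ 0 define the boundary equivalent kernel w_bnd(u,s) := e₀ᵀ(∫_{−s}^{1} r_p(v)r_p(v)ᵀK(v)dv)⁻¹ r_p(u)K(u), assuming the matrices are invertible, so that ∫_{−s}^{1} w_bnd(u,s)u^j du = δ_{j0} for 0 ≤ j ≤ p. Let C := ∫₀¹ w_bnd(u,0)u^{p+1}du and C_LP := ∫₀¹ w_bnd(s,0) ∫_{−s}^{1} w_bnd(u,s)u^{p+1} du ds. Define the boundary convolution kernel w_conv,bnd(u) := ∫₀¹ w_bnd(r,0) w_bnd(u−r, r) dr. Then ∫ w_conv,bnd(u) u^{p+1} du = C + C_LP. -/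

import Mathlib

open MeasureTheory

/-- Boundary convolution moment identity: the `(p+1)`-th moment of the boundary
convolution kernel `w_conv,bnd(u) = ∫₀¹ w_bnd(r,0) w_bnd(u−r,r) dr` equals `C + C_LP`. -/
theorem boundary_convolution_moment
    (p : ℕ) (hp : 1 ≤ p) (hodd : Odd p)
    (wbnd : ℝ → ℝ → ℝ)
    (hmeas : Measurable (Function.uncurry wbnd))
    (hbdd : ∃ M : ℝ, ∀ u s : ℝ, |wbnd u s| ≤ M)
    (hsupp : ∀ s u : ℝ, u ∉ Set.Ioc (-s) 1 → wbnd u s = 0)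
    (hmom : ∀ s ∈ Set.Icc (0 : ℝ) 1, ∀ j : ℕ, j ≤ p →
        (∫ u in Set.Ioc (-s) 1, wbnd u s * u ^ j) = if j = 0 then 1 else 0)
    (C CLP : ℝ)
    (hC : C = ∫ u in Set.Ioc (0 : ℝ) 1, wbnd u 0 * u ^ (p + 1))
    (hCLP : CLP = ∫ s in Set.Ioc (0 : ℝ) 1,
        wbnd s 0 * ∫ u in Set.Ioc (-s) 1, wbnd u s * u ^ (p + 1))
    (wconv : ℝ → ℝ)
    (hconv : ∀ u : ℝ, wconv u = ∫ r in Set.Ioc (0 : ℝ) 1, wbnd r 0 * wbnd (u - r) r) :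
    (∫ u : ℝ, wconv u * u ^ (p + 1)) = C + CLP := by
  clear hp hodd
  obtain ⟨M, hM⟩ := hbdd
  have hMnn : 0 ≤ M := le_trans (abs_nonneg _) (hM 0 0)
  set I01 : Set ℝ := Set.Ioc (0:ℝ) 1 with hI01
  set I02 : Set ℝ := Set.Ioc (0:ℝ) 2 with hI02
  have hmw : ∀ s : ℝ, Measurable fun u => wbnd u s := fun s =>
    hmeas.comp (measurable_id.prodMk measurable_const)
  set Mom : ℝ → ℝ := fun r => ∫ u in Set.Ioc (-r) 1, wbnd u r * u ^ (p+1) with hMomDef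
  -- support facts
  have hsupp2 : ∀ r ∈ I01, ∀ u : ℝ, u ∉ I02 → wbnd (u - r) r = 0 := by
    intro r hr u hu
    apply hsupp
    intro h
    apply hu
    constructor
    · linarith [h.1]
    · linarith [h.2, hr.2]
  -- wconv vanishes off I02
  have hw0 : ∀ u ∉ I02, wconv u * u ^ (p+1) = 0 := by
    intro u hu
    rw [hconv]
    have : ∫ r in I01, wbnd r 0 * wbnd (u - r) r = ∫ r in I01, (0:ℝ) := by
      refine setIntegral_congr_fun measurableSet_Ioc fun r hr => ?_
      rw [hsupp2 r hr u hu, mul_zero]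
    rw [this, integral_zero, zero_mul]
  -- rewrite integrand
  have hrw : ∀ u : ℝ, wconv u * u ^ (p+1)
      = ∫ r in I01, wbnd r 0 * (wbnd (u - r) r * u ^ (p+1)) := by
    intro u
    rw [hconv, ← integral_mul_const]
    refine setIntegral_congr_fun measurableSet_Ioc fun r _ => ?_
    ring
  -- product integrability
  set F : ℝ × ℝ → ℝ := fun q => wbnd q.2 0 * (wbnd (q.1 - q.2) q.2 * q.1 ^ (p+1)) with hFdef
  have hFmeas : Measurable F := by
    refine Measurable.mul ?_ (Measurable.mul ?_ (measurable_fst.pow_const _))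
    · exact hmeas.comp (measurable_snd.prodMk measurable_const)
    · exact hmeas.comp ((measurable_fst.sub measurable_snd).prodMk measurable_snd)
  have hFint : Integrable F ((volume.restrict I02).prod (volume.restrict I01)) := by
    refine Integrable.mono' (g := fun _ => M * (M * 2 ^ (p+1))) ?_ hFmeas.aestronglyMeasurable ?_
    · rw [integrable_const_iff]
      right
      constructor
      rw [Measure.prod_restrict, Measure.restrict_apply_univ, Measure.prod_prod]
      exact ENNReal.mul_lt_top measure_Ioc_lt_top measure_Ioc_lt_top
    · rw [Measure.prod_restrict]
      filter_upwards [ae_restrict_mem (measurableSet_Ioc.prod measurableSet_Ioc)] with q hq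
      have hq1 : q.1 ∈ I02 := hq.1
      have habs : |q.1| ≤ 2 := abs_le.2 ⟨by linarith [hq1.1], hq1.2⟩
      have hpow : |q.1| ^ (p+1) ≤ 2 ^ (p+1) := pow_le_pow_left₀ (abs_nonneg _) habs _
      have : ‖F q‖ = |wbnd q.2 0| * (|wbnd (q.1 - q.2) q.2| * |q.1| ^ (p+1)) := by
        simp [hFdef, abs_mul, abs_pow]
      rw [this]
      refine mul_le_mul (hM _ _) ?_ (by positivity) hMnn
      refine mul_le_mul (hM _ _) hpow (by positivity) hMnn
  -- swap
  have hswap : (∫ u in I02, ∫ r in I01, wbnd r 0 * (wbnd (u - r) r * u ^ (p+1)))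
      = ∫ r in I01, ∫ u in I02, wbnd r 0 * (wbnd (u - r) r * u ^ (p+1)) :=
    integral_integral_swap hFint
  -- inner integral evaluation
  have hinner : ∀ r ∈ I01, (∫ u in I02, wbnd r 0 * (wbnd (u - r) r * u ^ (p+1)))
      = wbnd r 0 * r ^ (p+1) + wbnd r 0 * Mom r := by
    intro r hr
    have hr0 : (0:ℝ) ≤ r := le_of_lt hr.1
    have hr1 : r ≤ 1 := hr.2
    rw [integral_const_mul]
    have h1 : (∫ u in I02, wbnd (u - r) r * u ^ (p+1)) = ∫ u : ℝ, wbnd (u - r) r * u ^ (p+1) :=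
      setIntegral_eq_integral_of_forall_compl_eq_zero fun u hu => by
        rw [hsupp2 r hr u hu, zero_mul]
    have h2 : (∫ u : ℝ, wbnd (u - r) r * u ^ (p+1)) = ∫ v : ℝ, wbnd v r * (v + r) ^ (p+1) := by
      have := integral_sub_right_eq_self (μ := volume) (fun v => wbnd v r * (v + r) ^ (p+1)) r
      simpa using this
    have h3 : (∫ v : ℝ, wbnd v r * (v + r) ^ (p+1))
        = ∫ v in Set.Ioc (-r) 1, wbnd v r * (v + r) ^ (p+1) :=
      (setIntegral_eq_integral_of_forall_compl_eq_zero fun v hv => by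
        rw [hsupp r v hv, zero_mul]).symm
    have hintk : ∀ k : ℕ, Integrable
        (fun v => (wbnd v r * v ^ k) * (r ^ (p+1-k) * ((p+1).choose k : ℝ)))
        (volume.restrict (Set.Ioc (-r) 1)) := by
      intro k
      refine Integrable.mono' (g := fun _ => M * 1 * (r ^ (p+1-k) * ((p+1).choose k : ℝ))) ?_ ?_ ?_
      · rw [integrable_const_iff]; right
        constructor; rw [Measure.restrict_apply_univ]; exact measure_Ioc_lt_top
      · exact (((hmw r).mul (measurable_id.pow_const k)).mul_const _).aestronglyMeasurable
      · filter_upwards [ae_restrict_mem measurableSet_Ioc] with v hv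
        have hv1 : |v| ≤ 1 := abs_le.2 ⟨by linarith [hv.1], hv.2⟩
        have : ‖wbnd v r * v ^ k * (r ^ (p+1-k) * ((p+1).choose k : ℝ))‖
            = |wbnd v r| * |v| ^ k * |r ^ (p+1-k) * ((p+1).choose k : ℝ)| := by
          simp [abs_mul, abs_pow]
        rw [this, abs_of_nonneg (mul_nonneg (pow_nonneg hr0 _) (Nat.cast_nonneg _))]
        refine mul_le_mul ?_ le_rfl
          (mul_nonneg (pow_nonneg hr0 _) (Nat.cast_nonneg _)) (by positivity)
        refine mul_le_mul (hM _ _) (pow_le_one₀ (abs_nonneg _) hv1) (by positivity) hMnn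
    have h4 : (∫ v in Set.Ioc (-r) 1, wbnd v r * (v + r) ^ (p+1))
        = ∑ k ∈ Finset.range (p+2),
            (∫ v in Set.Ioc (-r) 1, wbnd v r * v ^ k) * (r ^ (p+1-k) * ((p+1).choose k : ℝ)) := by
      have heq : ∀ v : ℝ, wbnd v r * (v + r) ^ (p+1)
          = ∑ k ∈ Finset.range (p+2), (wbnd v r * v ^ k) * (r ^ (p+1-k) * ((p+1).choose k : ℝ)) := by
        intro v
        rw [add_pow, Finset.mul_sum]
        exact Finset.sum_congr rfl fun k _ => by ring
      calc (∫ v in Set.Ioc (-r) 1, wbnd v r * (v + r) ^ (p+1))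
          = ∫ v in Set.Ioc (-r) 1, ∑ k ∈ Finset.range (p+2),
              (wbnd v r * v ^ k) * (r ^ (p+1-k) * ((p+1).choose k : ℝ)) := by
            exact setIntegral_congr_fun measurableSet_Ioc fun v _ => heq v
        _ = ∑ k ∈ Finset.range (p+2),
              ∫ v in Set.Ioc (-r) 1, (wbnd v r * v ^ k) * (r ^ (p+1-k) * ((p+1).choose k : ℝ)) :=
            integral_finset_sum _ fun k _ => hintk k
        _ = ∑ k ∈ Finset.range (p+2),
              (∫ v in Set.Ioc (-r) 1, wbnd v r * v ^ k) * (r ^ (p+1-k) * ((p+1).choose k : ℝ)) := by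
            exact Finset.sum_congr rfl fun k _ => integral_mul_const _ _
    have h5 : ∑ k ∈ Finset.range (p+2),
          (∫ v in Set.Ioc (-r) 1, wbnd v r * v ^ k) * (r ^ (p+1-k) * ((p+1).choose k : ℝ))
        = r ^ (p+1) + Mom r := by
      rw [Finset.sum_range_succ]
      have hlast : (∫ v in Set.Ioc (-r) 1, wbnd v r * v ^ (p+1))
          * (r ^ (p+1-(p+1)) * ((p+1).choose (p+1) : ℝ)) = Mom r := by
        simp [hMomDef]
      rw [hlast]
      congr 1
      have hterms : ∀ k ∈ Finset.range (p+1),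
          (∫ v in Set.Ioc (-r) 1, wbnd v r * v ^ k) * (r ^ (p+1-k) * ((p+1).choose k : ℝ))
          = (if k = 0 then (1:ℝ) else 0) * (r ^ (p+1-k) * ((p+1).choose k : ℝ)) := by
        intro k hk
        rw [hmom r ⟨hr0, hr1⟩ k (Nat.lt_succ_iff.mp (Finset.mem_range.mp hk))]
      rw [Finset.sum_congr rfl hterms, Finset.sum_eq_single 0]
      · simp
      · intro k _ hk0; simp [hk0]
      · intro h; exact absurd (Finset.mem_range.mpr (Nat.succ_pos p)) h
    rw [h1, h2, h3, h4, h5, mul_add]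
  -- outer integrabilities
  have hMomMeas : Measurable Mom := by
    have hrepr : Mom = fun r => ∫ v : ℝ,
        (Set.Ioc (-r) 1).indicator (fun v => wbnd v r * v ^ (p+1)) v := by
      funext r
      rw [integral_indicator measurableSet_Ioc]
    rw [hrepr]
    have hG : StronglyMeasurable (Function.uncurry fun r v =>
        (Set.Ioc (-r) 1).indicator (fun v => wbnd v r * v ^ (p+1)) v) := by
      apply Measurable.stronglyMeasurable
      have : (Function.uncurry fun r v =>
          (Set.Ioc (-r) 1).indicator (fun v => wbnd v r * v ^ (p+1)) v)
          = fun q : ℝ × ℝ => if q ∈ {q : ℝ × ℝ | -q.1 < q.2 ∧ q.2 ≤ 1}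
              then wbnd q.2 q.1 * q.2 ^ (p+1) else 0 := by
        funext q
        simp [Function.uncurry, Set.indicator_apply, Set.mem_Ioc, Set.mem_setOf_eq]
      rw [this]
      refine Measurable.ite ?_ ?_ measurable_const
      · exact ((measurableSet_lt measurable_fst.neg measurable_snd).inter
          (measurableSet_le measurable_snd measurable_const))
      · exact (hmeas.comp (measurable_snd.prodMk measurable_fst)).mul (measurable_snd.pow_const _)
    exact hG.integral_prod_right.measurable
  have hMomBdd : ∀ r ∈ I01, |Mom r| ≤ M * 2 := by
    intro r hr
    have hr0 : (0:ℝ) ≤ r := le_of_lt hr.1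
    have hr1 : r ≤ 1 := hr.2
    have hb : ∀ v ∈ Set.Ioc (-r) 1, ‖wbnd v r * v ^ (p+1)‖ ≤ M := by
      intro v hv
      have hv1 : |v| ≤ 1 := abs_le.2 ⟨by linarith [hv.1], hv.2⟩
      have : ‖wbnd v r * v ^ (p+1)‖ = |wbnd v r| * |v| ^ (p+1) := by
        simp [abs_mul, abs_pow]
      rw [this]
      calc |wbnd v r| * |v| ^ (p+1) ≤ M * 1 :=
        mul_le_mul (hM _ _) (pow_le_one₀ (abs_nonneg _) hv1) (by positivity) hMnn
      _ = M := mul_one M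
    have := norm_setIntegral_le_of_norm_le_const (μ := volume) (s := Set.Ioc (-r) 1)
      (f := fun v => wbnd v r * v ^ (p+1)) measure_Ioc_lt_top hb
    have hvol : (volume (Set.Ioc (-r) 1)).toReal = 1 + r := by
      rw [Real.volume_Ioc, ENNReal.toReal_ofReal (by linarith)]
      ring
    rw [measureReal_def, hvol] at this
    calc |Mom r| ≤ M * (1 + r) := this
    _ ≤ M * 2 := by nlinarith
  have hint1 : Integrable (fun r => wbnd r 0 * r ^ (p+1)) (volume.restrict I01) := by
    refine Integrable.mono' (g := fun _ => M * 1) ?_ ?_ ?_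
    · rw [integrable_const_iff]; right
      constructor; rw [Measure.restrict_apply_univ]; exact measure_Ioc_lt_top
    · exact ((hmw 0).mul (measurable_id.pow_const _)).aestronglyMeasurable
    · filter_upwards [ae_restrict_mem measurableSet_Ioc] with r hr
      have hr1 : |r| ≤ 1 := abs_le.2 ⟨by linarith [hr.1], hr.2⟩
      have : ‖wbnd r 0 * r ^ (p+1)‖ = |wbnd r 0| * |r| ^ (p+1) := by simp [abs_mul, abs_pow]
      rw [this]
      exact mul_le_mul (hM _ _) (pow_le_one₀ (abs_nonneg _) hr1) (by positivity) hMnn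
  have hint2 : Integrable (fun r => wbnd r 0 * Mom r) (volume.restrict I01) := by
    refine Integrable.mono' (g := fun _ => M * (M * 2)) ?_ ?_ ?_
    · rw [integrable_const_iff]; right
      constructor; rw [Measure.restrict_apply_univ]; exact measure_Ioc_lt_top
    · exact ((hmw 0).mul hMomMeas).aestronglyMeasurable
    · filter_upwards [ae_restrict_mem measurableSet_Ioc] with r hr
      have : ‖wbnd r 0 * Mom r‖ = |wbnd r 0| * |Mom r| := abs_mul _ _
      rw [this]
      exact mul_le_mul (hM _ _) (hMomBdd r hr) (abs_nonneg _) hMnn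
  -- assemble
  calc (∫ u : ℝ, wconv u * u ^ (p + 1))
      = ∫ u in I02, wconv u * u ^ (p + 1) :=
        (setIntegral_eq_integral_of_forall_compl_eq_zero hw0).symm
    _ = ∫ u in I02, ∫ r in I01, wbnd r 0 * (wbnd (u - r) r * u ^ (p+1)) :=
        setIntegral_congr_fun measurableSet_Ioc fun u _ => hrw u
    _ = ∫ r in I01, ∫ u in I02, wbnd r 0 * (wbnd (u - r) r * u ^ (p+1)) := hswap
    _ = ∫ r in I01, (wbnd r 0 * r ^ (p+1) + wbnd r 0 * Mom r) :=
        setIntegral_congr_fun measurableSet_Ioc hinner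
    _ = (∫ r in I01, wbnd r 0 * r ^ (p+1)) + ∫ r in I01, wbnd r 0 * Mom r :=
        integral_add hint1 hint2
    _ = C + CLP := by rw [hC, hCLP]
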